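/- Let A = B([0,1]) = Bor([0,1])/J be the quotient of bounded Borel functions by those supported on a meager set. There exists f ∈ l₂(A)' with ⟨f, f⟩' ≥ 1 such that f·a ∈ l₂(A) for a ∈ A implies a = 0 (i.e. J_f = 0). -/

import Mathlib

open Filter

/-- The quotient norm of (the class of) a bounded Borel function `ψ` in
`B(X) = Bor(X)/{functions with meager support}`: the infimum of the levels `t ≥ 0` such
that `|ψ| > t` only on a meager set. -/
noncomputable def quotNorm {X : Type*} [TopologicalSpace X] (ψ : X → ℝ) : ℝ :=
  sInf {t : ℝ | 0 ≤ t ∧ IsMeagre {x : X | t < |ψ x|}}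


def Iset (r : ℝ) (j : ℕ) : Set ℝ := Set.Ico (r + ((j:ℝ)+2)⁻¹) (r + ((j:ℝ)+1)⁻¹)

lemma Iset_disjoint {r : ℝ} {j j' : ℕ} {x : ℝ} (h : x ∈ Iset r j) (h' : x ∈ Iset r j') :
    j = j' := by
  by_contra hne
  rcases Nat.lt_or_ge j j' with hlt | hge
  · have h1 : ((j':ℝ)+1)⁻¹ ≤ ((j:ℝ)+2)⁻¹ := by
      apply inv_anti₀ (by positivity)
      have : (j:ℝ) + 1 ≤ (j':ℝ) := by exact_mod_cast hlt
      linarith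
    have := h.1; have := h'.2; linarith
  · have hlt : j' < j := lt_of_le_of_ne hge (Ne.symm hne)
    have h1 : ((j:ℝ)+1)⁻¹ ≤ ((j':ℝ)+2)⁻¹ := by
      apply inv_anti₀ (by positivity)
      have : (j':ℝ) + 1 ≤ (j:ℝ) := by exact_mod_cast hlt
      linarith
    have := h'.1; have := h.2; linarith

noncomputable def rr (m : ℕ) : ℝ := ((Denumerable.ofNat ℚ m : ℚ) : ℝ)

lemma rr_surj (q : ℚ) : ∃ m, rr m = (q : ℝ) := by
  obtain ⟨m, hm⟩ : ∃ m, Denumerable.ofNat ℚ m = q := ⟨_, Denumerable.ofNat_encode q⟩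
  exact ⟨m, by rw [rr, hm]⟩

noncomputable def FF : ℕ → (↥(Set.Icc (0 : ℝ) 1) → ℂ)
  | 0 => fun _ => 1
  | (k+1) => fun x => Set.indicator
      (Subtype.val ⁻¹' Iset (rr (Nat.unpair k).1) (Nat.unpair k).2)
      (fun _ => ((((2:ℝ)^(Nat.unpair k).1)⁻¹ : ℝ) : ℂ)) x

lemma FF_measurable (n : ℕ) : Measurable (FF n) := by
  cases n with
  | zero => exact measurable_const
  | succ k =>
    exact Measurable.indicator measurable_const
      (measurableSet_Ico.preimage measurable_subtype_coe)

lemma FF_of_mem {k : ℕ} {x : ↥(Set.Icc (0:ℝ) 1)}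
    (hx : (x:ℝ) ∈ Iset (rr (Nat.unpair k).1) (Nat.unpair k).2) :
    FF (k+1) x = ((((2:ℝ)^(Nat.unpair k).1)⁻¹ : ℝ) : ℂ) := by
  simp only [FF]
  exact Set.indicator_of_mem (Set.mem_preimage.2 hx) _

lemma FF_of_not_mem {k : ℕ} {x : ↥(Set.Icc (0:ℝ) 1)}
    (hx : (x:ℝ) ∉ Iset (rr (Nat.unpair k).1) (Nat.unpair k).2) :
    FF (k+1) x = 0 := by
  simp only [FF]
  exact Set.indicator_of_notMem (fun h => hx (Set.mem_preimage.1 h)) _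

lemma FF_norm_le_one (n : ℕ) (x : ↥(Set.Icc (0:ℝ) 1)) : ‖FF n x‖ ≤ 1 := by
  cases n with
  | zero => simp [FF]
  | succ k =>
    by_cases hx : (x:ℝ) ∈ Iset (rr (Nat.unpair k).1) (Nat.unpair k).2
    · rw [FF_of_mem hx, Complex.norm_real, Real.norm_eq_abs,
        abs_of_nonneg (by positivity)]
      exact inv_le_one_of_one_le₀ (one_le_pow₀ (by norm_num))
    · simp [FF_of_not_mem hx]

lemma FF_sq {k : ℕ} {x : ↥(Set.Icc (0:ℝ) 1)}
    (hx : (x:ℝ) ∈ Iset (rr (Nat.unpair k).1) (Nat.unpair k).2) :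
    ‖FF (k+1) x‖ ^ 2 = ((4:ℝ)⁻¹) ^ (Nat.unpair k).1 := by
  rw [FF_of_mem hx, Complex.norm_real, Real.norm_eq_abs,
    abs_of_nonneg (show (0:ℝ) ≤ ((2:ℝ)^(Nat.unpair k).1)⁻¹ by positivity),
    inv_pow, ← pow_mul, ← inv_pow]
  rw [Nat.mul_comm, pow_mul]
  norm_num

lemma FF_ne_zero_mem {k : ℕ} {x : ↥(Set.Icc (0:ℝ) 1)} (h : FF (k+1) x ≠ 0) :
    (x:ℝ) ∈ Iset (rr (Nat.unpair k).1) (Nat.unpair k).2 := by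
  by_contra hx
  exact h (FF_of_not_mem hx)

lemma FF_sum_bound (n : ℕ) (x : ↥(Set.Icc (0:ℝ) 1)) :
    ∑ k ∈ Finset.range n, ‖FF k x‖ ^ 2 ≤ 3 := by
  classical
  set g : ℕ → ℝ := fun k => ‖FF k x‖ ^ 2 with hg
  set φ : ℕ → ℕ := fun k => if k = 0 then n else (Nat.unpair (k-1)).1 with hφ
  set h : ℕ → ℝ := fun m => if m = n then (1:ℝ) else ((4:ℝ)⁻¹) ^ m with hh
  set s : Finset ℕ := (Finset.range n).filter (fun k => g k ≠ 0) with hs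
  have hsum : ∑ k ∈ Finset.range n, g k = ∑ k ∈ s, g k :=
    (Finset.sum_filter_ne_zero _).symm
  have hmem : ∀ k ∈ s, k ≠ 0 → (k-1)+1 = k ∧ (Nat.unpair (k-1)).1 < n := by
    intro k hk hk0
    obtain ⟨hkr, hkg⟩ := Finset.mem_filter.1 hk
    have hkn := Finset.mem_range.1 hkr
    obtain ⟨i, rfl⟩ := Nat.exists_eq_succ_of_ne_zero hk0
    refine ⟨rfl, ?_⟩
    simp only [Nat.succ_sub_one]
    exact lt_of_le_of_lt (Nat.unpair_left_le i) (Nat.lt_of_succ_lt hkn)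
  have claim1 : ∀ k ∈ s, g k = h (φ k) := by
    intro k hk
    by_cases hk0 : k = 0
    · subst hk0; simp [hg, hφ, hh, FF]
    · obtain ⟨i, rfl⟩ := Nat.exists_eq_succ_of_ne_zero hk0
      have hne : FF (i+1) x ≠ 0 := by
        intro hz
        exact (Finset.mem_filter.1 hk).2 (by simp [hg, hz])
      have hmemI := FF_ne_zero_mem hne
      have hlt : (Nat.unpair i).1 < n := by
        simpa using (hmem _ hk (Nat.succ_ne_zero i)).2
      simp only [hg, hφ, hh, Nat.succ_sub_one, if_neg (Nat.succ_ne_zero i),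
        if_neg (Nat.ne_of_lt hlt)]
      exact FF_sq hmemI
  have claim2 : ∀ k ∈ s, ∀ k' ∈ s, φ k = φ k' → k = k' := by
    intro k hk k' hk' heq
    by_cases hk0 : k = 0 <;> by_cases hk0' : k' = 0
    · rw [hk0, hk0']
    · exfalso
      obtain ⟨i, rfl⟩ := Nat.exists_eq_succ_of_ne_zero hk0'
      have := (hmem _ hk' hk0').2
      rw [hφ] at heq
      simp only [hk0, if_pos, if_neg (Nat.succ_ne_zero i), Nat.succ_sub_one, Nat.add_sub_cancel] at heq
      simp only [Nat.succ_sub_one, Nat.add_sub_cancel] at this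
      omega
    · exfalso
      obtain ⟨i, rfl⟩ := Nat.exists_eq_succ_of_ne_zero hk0
      have := (hmem _ hk hk0).2
      rw [hφ] at heq
      simp only [hk0', if_pos, if_neg (Nat.succ_ne_zero i), Nat.succ_sub_one, Nat.add_sub_cancel] at heq
      simp only [Nat.succ_sub_one, Nat.add_sub_cancel] at this
      omega
    · obtain ⟨i, rfl⟩ := Nat.exists_eq_succ_of_ne_zero hk0
      obtain ⟨i', rfl⟩ := Nat.exists_eq_succ_of_ne_zero hk0'
      rw [hφ] at heq
      simp only [if_neg (Nat.succ_ne_zero i), if_neg (Nat.succ_ne_zero i'),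
        Nat.succ_sub_one] at heq
      have hne : FF (i+1) x ≠ 0 := by
        intro hz; exact (Finset.mem_filter.1 hk).2 (by simp [hg, hz])
      have hne' : FF (i'+1) x ≠ 0 := by
        intro hz; exact (Finset.mem_filter.1 hk').2 (by simp [hg, hz])
      have hm := FF_ne_zero_mem hne
      have hm' := FF_ne_zero_mem hne'
      rw [heq] at hm
      have hj : (Nat.unpair i).2 = (Nat.unpair i').2 := Iset_disjoint hm hm'
      have : Nat.unpair i = Nat.unpair i' := Prod.ext heq hj
      have : i = i' := by
        have h1 := Nat.pair_unpair i
        have h2 := Nat.pair_unpair i'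
        rw [this] at h1; rw [← h1, h2]
      rw [this]
  have himg : ∑ k ∈ s, h (φ k) = ∑ m ∈ s.image φ, h m :=
    (Finset.sum_image claim2).symm
  have hsub : s.image φ ⊆ Finset.range (n+1) := by
    intro m hm
    obtain ⟨k, hk, rfl⟩ := Finset.mem_image.1 hm
    rw [Finset.mem_range, hφ]
    by_cases hk0 : k = 0
    · simp [hk0]
    · simp only [if_neg hk0]
      exact Nat.lt_succ_of_lt (hmem _ hk hk0).2
  have hhnn : ∀ m, 0 ≤ h m := by
    intro m; rw [hh]; dsimp only; split <;> positivity
  have hbound : ∑ m ∈ Finset.range (n+1), h m ≤ 3 := by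
    rw [Finset.sum_range_succ, hh]
    simp only [eq_self_iff_true, if_true]
    have h1 : ∑ m ∈ Finset.range n, (if m = n then (1:ℝ) else (4:ℝ)⁻¹ ^ m)
        = ∑ m ∈ Finset.range n, (4:ℝ)⁻¹ ^ m := by
      apply Finset.sum_congr rfl
      intro m hm
      rw [if_neg (Nat.ne_of_lt (Finset.mem_range.1 hm))]
    rw [h1]
    have h2 : ∑ m ∈ Finset.range n, (4:ℝ)⁻¹ ^ m ≤ ∑ m ∈ Finset.range n, (1/2:ℝ) ^ m := by
      apply Finset.sum_le_sum
      intro m _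
      apply pow_le_pow_left₀ (by norm_num) (by norm_num)
    have h3 := sum_geometric_two_le n
    linarith
  calc ∑ k ∈ Finset.range n, g k = ∑ k ∈ s, g k := hsum
    _ = ∑ k ∈ s, h (φ k) := Finset.sum_congr rfl claim1
    _ = ∑ m ∈ s.image φ, h m := himg
    _ ≤ ∑ m ∈ Finset.range (n+1), h m :=
        Finset.sum_le_sum_of_subset_of_nonneg hsub (fun m _ _ => hhnn m)
    _ ≤ 3 := hbound

lemma quotNorm_ge {X : Type*} [TopologicalSpace X] {ψ : X → ℝ} {c t0 : ℝ}
    (ht0 : 0 ≤ t0) (hm : IsMeagre {x : X | t0 < |ψ x|})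
    (h : ∀ t, 0 ≤ t → IsMeagre {x : X | t < |ψ x|} → c ≤ t) : c ≤ quotNorm ψ :=
  le_csInf ⟨t0, ht0, hm⟩ (fun t ht => h t ht.1 ht.2)

lemma not_isMeagre_of_isOpen' {X : Type*} [TopologicalSpace X] [BaireSpace X] {U : Set X}
    (hU : IsOpen U) (hne : U.Nonempty) : ¬ IsMeagre U := by
  intro h
  have hd : Dense Uᶜ := dense_of_mem_residual h
  obtain ⟨x, hx, hxU⟩ := hd.exists_mem_open hU hne
  exact hx hxU

lemma isMeagre_union {X : Type*} [TopologicalSpace X] {s t : Set X}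
    (hs : IsMeagre s) (ht : IsMeagre t) : IsMeagre (s ∪ t) := by
  rw [IsMeagre, Set.compl_union]
  exact Filter.inter_mem hs ht

lemma FF_pair_sq {m j : ℕ} {x : ↥(Set.Icc (0:ℝ) 1)} (hx : (x:ℝ) ∈ Iset (rr m) j) :
    ‖FF (Nat.pair m j + 1) x‖ ^ 2 = ((4:ℝ)⁻¹) ^ m := by
  have h1 := FF_sq (k := Nat.pair m j) (x := x)
  rw [Nat.unpair_pair] at h1
  exact h1 hx


/-- Let `A = B([0,1]) = Bor([0,1])/J` be the quotient of the bounded Borel functions on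
`[0,1]` by those with meager support.  There exists `f = ([f_n]) ∈ l₂(A)'`
(a sequence of bounded Borel functions whose partial sums `Σ_{k<n} |f_k|²` are uniformly
bounded) with `⟨f, f⟩' ≥ 1` (witnessed by its zeroth component being `1`) such that for
every `a ∈ A` (a bounded Borel function), if `f·a ∈ l₂(A)` — i.e. the partial sums of
`Σ |f_k·a|²` form a Cauchy sequence for the quotient norm of `B([0,1])` — then `a = 0`
in `A`, i.e. `{x : a x ≠ 0}` is meager.  In other words, `J_f = 0`. -/
theorem exists_dual_functional_with_Jf_zero :
    ∃ f : ℕ → (↥(Set.Icc (0 : ℝ) 1) → ℂ),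
      (∀ n, Measurable (f n)) ∧
      (f 0 = fun _ => 1) ∧
      (∃ C : ℝ, ∀ (n : ℕ) (x : ↥(Set.Icc (0 : ℝ) 1)),
        ∑ k ∈ Finset.range n, ‖f k x‖ ^ 2 ≤ C) ∧
      ∀ a : ↥(Set.Icc (0 : ℝ) 1) → ℂ, Measurable a → (∃ C : ℝ, ∀ x, ‖a x‖ ≤ C) →
        (∀ ε : ℝ, 0 < ε → ∃ N : ℕ, ∀ p q : ℕ, N ≤ p → N ≤ q →
          quotNorm ((fun x => ∑ k ∈ Finset.range p, ‖f k x * a x‖ ^ 2) -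
                    (fun x => ∑ k ∈ Finset.range q, ‖f k x * a x‖ ^ 2)) < ε) →
        IsMeagre {x : ↥(Set.Icc (0 : ℝ) 1) | a x ≠ 0} := by
  classical
  refine ⟨FF, FF_measurable, rfl, ⟨3, FF_sum_bound⟩, ?_⟩
  rintro a ha ⟨Ca, hCa⟩ hcauchy
  by_contra hmeag
  -- Step 1: find a level set of positive level that is non-meagre
  have hsub : {x : ↥(Set.Icc (0:ℝ) 1) | a x ≠ 0}
      ⊆ ⋃ k : ℕ, {x | 1/((k:ℝ)+1) < ‖a x‖} := by
    intro x hx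
    have : 0 < ‖a x‖ := norm_pos_iff.2 hx
    obtain ⟨k, hk⟩ := exists_nat_one_div_lt this
    exact Set.mem_iUnion.2 ⟨k, hk⟩
  have hnk : ¬ ∀ k : ℕ, IsMeagre {x : ↥(Set.Icc (0:ℝ) 1) | 1/((k:ℝ)+1) < ‖a x‖} := by
    intro h
    exact hmeag ((isMeagre_iUnion h).mono hsub)
  push_neg at hnk
  obtain ⟨k0, hk0⟩ := hnk
  set δ : ℝ := 1/((k0:ℝ)+1) with hδdef
  have hδ : 0 < δ := by positivity
  set T : Set ↥(Set.Icc (0:ℝ) 1) := {x | δ < ‖a x‖} with hTdef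
  have hT : MeasurableSet T := measurableSet_lt measurable_const ha.norm
  obtain ⟨U, hUo, hTU⟩ := hT.residualEq_isOpen
  set M : Set ↥(Set.Icc (0:ℝ) 1) := {x | ¬ ((x ∈ T) = (x ∈ U))} with hMdef
  have hM : IsMeagre M := by
    rw [IsMeagre]
    have : Mᶜ = {x | (x ∈ T) = (x ∈ U)} := by
      ext x; simp [hMdef]
    rw [this]
    exact hTU
  have hUne : U.Nonempty := by
    rcases Set.eq_empty_or_nonempty U with rfl | h
    · exfalso
      apply hk0
      have hTM : T ⊆ M := by
        intro x hx
        simp only [hMdef, Set.mem_setOf_eq, Set.mem_empty_iff_false, eq_iff_iff,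
          iff_false, not_not]
        exact hx
      exact hM.mono hTM
    · exact h
  obtain ⟨x0, hx0U⟩ := hUne
  obtain ⟨V, hVo, hVU⟩ := isOpen_induced_iff.1 hUo
  have hx0V : (x0:ℝ) ∈ V := by rw [← hVU] at hx0U; exact hx0U
  obtain ⟨η, hη, hball⟩ := Metric.isOpen_iff.1 hVo _ hx0V
  rw [Real.ball_eq_Ioo] at hball
  -- Step 2: find y ∈ [0,1) and a small interval around it inside V
  obtain ⟨y, hy0, hy1, η', hη', hIoo⟩ :
      ∃ y : ℝ, 0 ≤ y ∧ y < 1 ∧ ∃ η' > 0, Set.Ioo (y - η') (y + η') ⊆ V := by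
    rcases lt_or_eq_of_le x0.2.2 with h | h
    · exact ⟨(x0:ℝ), x0.2.1, h, η, hη, hball⟩
    · refine ⟨1 - (min η 1)/2, by
        have := min_le_right η 1; linarith, by
        have : 0 < min η 1 := lt_min hη one_pos; linarith,
        (min η 1)/2, by have : 0 < min η 1 := lt_min hη one_pos; linarith, ?_⟩
      have h1 : (x0:ℝ) - η ≤ 1 - (min η 1)/2 - (min η 1)/2 := by
        have := min_le_left η 1; rw [h]; linarith
      have h2 : 1 - (min η 1)/2 + (min η 1)/2 ≤ (x0:ℝ) + η := by rw [h]; linarith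
      exact Set.Subset.trans (Set.Ioo_subset_Ioo h1 h2) hball
  set θ : ℝ := min (η'/2) ((1-y)/2) with hθdef
  have hθ : 0 < θ := lt_min (by linarith) (by linarith)
  obtain ⟨q, hq1, hq2⟩ := exists_rat_btwn (show y < y + θ by linarith)
  obtain ⟨m, hm⟩ := rr_surj q
  set c : ℝ := ((4:ℝ)⁻¹)^m * δ^2 with hcdef
  have hcpos : 0 < c := by positivity
  obtain ⟨N, hN⟩ := hcauchy c hcpos
  obtain ⟨j0, hj0⟩ := exists_nat_one_div_lt hθ
  set j : ℕ := max j0 N with hjdef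
  have hjθ : ((j:ℝ)+1)⁻¹ < θ := by
    have h1 : ((j:ℝ)+1)⁻¹ ≤ ((j0:ℝ)+1)⁻¹ := by
      apply inv_anti₀ (by positivity)
      have : (j0:ℝ) ≤ (j:ℝ) := by exact_mod_cast le_max_left j0 N
      linarith
    rw [one_div] at hj0
    linarith
  set n : ℕ := Nat.pair m j + 1 with hndef
  have hnN : N ≤ n := le_trans (le_max_right j0 N)
    (le_trans (Nat.right_le_pair m j) (Nat.le_succ _))
  have hq := hN (n+1) n (le_trans hnN (Nat.le_succ n)) hnN
  have hdiff : ((fun x => ∑ k ∈ Finset.range (n+1), ‖FF k x * a x‖ ^ 2) -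
      (fun x => ∑ k ∈ Finset.range n, ‖FF k x * a x‖ ^ 2))
      = fun x => ‖FF n x * a x‖ ^ 2 := by
    funext x
    simp [Finset.sum_range_succ]
  rw [hdiff] at hq
  -- Step 3: the interval and relevant sets
  have hinv1 : 0 < ((j:ℝ)+1)⁻¹ := by positivity
  have hinv2 : 0 < ((j:ℝ)+2)⁻¹ := by positivity
  have hinv21 : ((j:ℝ)+2)⁻¹ < ((j:ℝ)+1)⁻¹ := by
    apply inv_strictAnti₀ (by positivity) (by linarith)
  have hθη : θ ≤ η'/2 := min_le_left _ _
  have hθy : θ ≤ (1-y)/2 := min_le_right _ _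
  set W : Set ↥(Set.Icc (0:ℝ) 1) :=
    Subtype.val ⁻¹' Set.Ioo ((q:ℝ) + ((j:ℝ)+2)⁻¹) ((q:ℝ) + ((j:ℝ)+1)⁻¹) with hWdef
  have hWo : IsOpen W := isOpen_Ioo.preimage continuous_subtype_val
  have hIooV : Set.Ioo ((q:ℝ) + ((j:ℝ)+2)⁻¹) ((q:ℝ) + ((j:ℝ)+1)⁻¹) ⊆ V := by
    apply Set.Subset.trans _ hIoo
    apply Set.Ioo_subset_Ioo
    · linarith
    · linarith
  have hWU : W ⊆ U := by
    intro x hx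
    rw [← hVU]
    exact hIooV hx
  have hWI : ∀ x : ↥(Set.Icc (0:ℝ) 1), x ∈ W → (x:ℝ) ∈ Iset (rr m) j := by
    intro x hx
    rw [hm]
    exact Set.Ioo_subset_Ico_self hx
  have hWne : W.Nonempty := by
    have hz1 : (q:ℝ) + ((j:ℝ)+2)⁻¹ < (q:ℝ) + (((j:ℝ)+2)⁻¹ + ((j:ℝ)+1)⁻¹)/2 := by linarith
    have hz2 : (q:ℝ) + (((j:ℝ)+2)⁻¹ + ((j:ℝ)+1)⁻¹)/2 < (q:ℝ) + ((j:ℝ)+1)⁻¹ := by linarith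
    have hz0 : (0:ℝ) ≤ (q:ℝ) + (((j:ℝ)+2)⁻¹ + ((j:ℝ)+1)⁻¹)/2 := by
      have := hq1.le; linarith
    have hzle : (q:ℝ) + (((j:ℝ)+2)⁻¹ + ((j:ℝ)+1)⁻¹)/2 ≤ 1 := by
      have := hq2.le; linarith
    exact ⟨⟨(q:ℝ) + (((j:ℝ)+2)⁻¹ + ((j:ℝ)+1)⁻¹)/2, hz0, hzle⟩, hz1, hz2⟩
  -- Step 4: lower bound for the quotient norm
  have hlow : c ≤ quotNorm (fun x : ↥(Set.Icc (0:ℝ) 1) => ‖FF n x * a x‖ ^ 2) := by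
    apply quotNorm_ge (t0 := (max Ca 1)^2)
    · positivity
    · have : {x : ↥(Set.Icc (0:ℝ) 1) | (max Ca 1)^2 < |‖FF n x * a x‖ ^ 2|} = ∅ := by
        rw [Set.eq_empty_iff_forall_notMem]
        intro x hx
        simp only [Set.mem_setOf_eq] at hx
        have h1 : ‖FF n x * a x‖ ≤ max Ca 1 := by
          rw [norm_mul]
          calc ‖FF n x‖ * ‖a x‖ ≤ 1 * (max Ca 1) := by
                apply mul_le_mul (FF_norm_le_one n x)
                  (le_trans (hCa x) (le_max_left _ _)) (norm_nonneg _) one_pos.le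
            _ = max Ca 1 := one_mul _
        have h2 : |‖FF n x * a x‖ ^ 2| = ‖FF n x * a x‖ ^ 2 := abs_of_nonneg (by positivity)
        rw [h2] at hx
        have := pow_le_pow_left₀ (norm_nonneg _) h1 2
        linarith
      rw [this]
      exact IsMeagre.empty
    · intro t ht hmt
      by_contra hct
      push_neg at hct
      -- then W ⊆ superlevel ∪ M, which would make W meagre
      have hWsub : W ⊆ {x : ↥(Set.Icc (0:ℝ) 1) | t < |‖FF n x * a x‖ ^ 2|} ∪ M := by
        intro x hx
        by_cases hxM : x ∈ M
        · exact Or.inr hxM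
        · left
          have hxT : x ∈ T := by
            simp only [hMdef, Set.mem_setOf_eq, not_not] at hxM
            rw [eq_iff_iff] at hxM
            exact hxM.2 (hWU hx)
          have hxI := hWI x hx
          have hnorm : ‖FF n x * a x‖ ^ 2 = ((4:ℝ)⁻¹)^m * ‖a x‖^2 := by
            rw [norm_mul, mul_pow, hndef, FF_pair_sq hxI]
          have haT : δ < ‖a x‖ := hxT
          have : c < ‖FF n x * a x‖ ^ 2 := by
            rw [hnorm, hcdef]
            have h4 : (0:ℝ) < ((4:ℝ)⁻¹)^m := by positivity
            have := mul_lt_mul_of_pos_left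
              (pow_lt_pow_left₀ haT hδ.le (by norm_num) : δ^2 < ‖a x‖^2) h4
            linarith
          simp only [Set.mem_setOf_eq, abs_of_nonneg (show (0:ℝ) ≤ ‖FF n x * a x‖^2 by positivity)]
          linarith
      have hWmeagre : IsMeagre W := (isMeagre_union hmt hM).mono hWsub
      exact not_isMeagre_of_isOpen' hWo hWne hWmeagre
  linarith
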